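/- Let R > 0, let δ ≥ 0 be real, and let z_p, z_s be complex numbers with Im(z_p) > 0, Im(z_s) > 0, Re(z_p) ≤ −1 and Re(z_s) ≤ −1. Define the 3×3 complex matrix A = [[R, 0, 0],[0, −1 − z_s, √δ],[0, −√δ, z_p]] and Λ = δ − z_p(1 + z_s). Then Λ ≠ 0, A is invertible, and A⁻¹ = [[1/R, 0, 0],[0, z_p/Λ, −√δ/Λ],[0, √δ/Λ, (−1 − z_s)/Λ]]. -/

import Mathlib

/-- Abstract form of Lemma 3.1: for `R > 0`, `δ ≥ 0`, and `z_p, z_s` with positive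
imaginary parts and real parts `≤ −1`, the matrix
`A = [[R, 0, 0],[0, −1 − z_s, √δ],[0, −√δ, z_p]]` has `Λ = δ − z_p(1 + z_s) ≠ 0`,
is invertible, and its inverse is
`[[1/R, 0, 0],[0, z_p/Λ, −√δ/Λ],[0, √δ/Λ, (−1 − z_s)/Λ]]`. -/
theorem stmt_3 (R δ : ℝ) (hR : 0 < R) (hδ : 0 ≤ δ)
    (zp zs : ℂ) (hip : 0 < zp.im) (his : 0 < zs.im)
    (hrp : zp.re ≤ -1) (hrs : zs.re ≤ -1) :
    let A : Matrix (Fin 3) (Fin 3) ℂ :=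
      !![(R : ℂ), 0, 0;
         0, -1 - zs, (Real.sqrt δ : ℂ);
         0, -(Real.sqrt δ : ℂ), zp]
    let Λ : ℂ := (δ : ℂ) - zp * (1 + zs)
    Λ ≠ 0 ∧ IsUnit A ∧
      A⁻¹ = !![((R : ℂ))⁻¹, 0, 0;
               0, zp / Λ, -(Real.sqrt δ : ℂ) / Λ;
               0, (Real.sqrt δ : ℂ) / Λ, (-1 - zs) / Λ] := by
  intro A Λ
  have hΛ : Λ ≠ 0 := by
    intro h
    have him : Λ.im = 0 := by rw [h]; simp
    have : Λ.im = -zp.re * zs.im + zp.im * (-(1 + zs.re)) := by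
      simp [Λ, Complex.sub_im, Complex.mul_im, Complex.add_im, Complex.add_re]
      ring
    have h1 : 0 < -zp.re * zs.im := by nlinarith
    have h2 : 0 ≤ zp.im * (-(1 + zs.re)) := by nlinarith
    nlinarith [this, him]
  have hs : ((Real.sqrt δ : ℝ) : ℂ) * ((Real.sqrt δ : ℝ) : ℂ) = (δ : ℂ) := by
    rw [← Complex.ofReal_mul, Real.mul_self_sqrt hδ]
  have hRne : (R : ℂ) ≠ 0 := by
    exact_mod_cast (ne_of_gt hR)
  have hmul : A * !![((R : ℂ))⁻¹, 0, 0;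
               0, zp / Λ, -(Real.sqrt δ : ℂ) / Λ;
               0, (Real.sqrt δ : ℂ) / Λ, (-1 - zs) / Λ] = 1 := by
    have hΛ2 : ((Real.sqrt δ : ℝ) : ℂ) * ((Real.sqrt δ : ℝ) : ℂ) - zp * (1 + zs) ≠ 0 := by
      rw [hs]; exact hΛ
    have hc1 : -(zs * zp) - zp + ((Real.sqrt δ : ℝ) : ℂ) ^ 2 ≠ 0 :=
      fun h0 => hΛ2 (by linear_combination h0)
    have hc2 : ((Real.sqrt δ : ℝ) : ℂ) ^ 2 + (-zp - zp * zs) ≠ 0 :=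
      fun h0 => hΛ2 (by linear_combination h0)
    ext i j
    fin_cases i <;> fin_cases j <;>
      simp [A, Matrix.mul_apply, Fin.sum_univ_succ, Matrix.one_apply] <;>
      (try tauto) <;> (try ring) <;>
      (try rw [show ((δ:ℝ):ℂ) = ((Real.sqrt δ : ℝ) : ℂ) * ((Real.sqrt δ : ℝ) : ℂ) from hs.symm]) <;>
      first
        | exact mul_inv_cancel₀ hRne
        | (rw [eq_comm, ← mul_inv_cancel₀ hc1]; ring)
        | (rw [eq_comm, ← mul_inv_cancel₀ hc2]; ring)
        | ring_nf <;>
            first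
              | (rw [eq_comm, ← mul_inv_cancel₀ hc1]; ring)
              | (rw [eq_comm, ← mul_inv_cancel₀ hc2]; ring)
    all_goals (simp only [Λ, ← hs]; ring)
  refine ⟨hΛ, ?_, Matrix.inv_eq_right_inv hmul⟩
  exact (Matrix.isUnit_iff_isUnit_det A).mpr (Matrix.isUnit_det_of_right_inverse hmul)
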